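/- Approximate greedy guarantee: Let h : 2^E → ℝ≥0 be a normalized monotone submodular function and I the intersection of p matroids on finite E. If a greedy algorithm at each step selects a feasible element whose marginal gain is at least a factor β ∈ (0,1] of the best feasible marginal gain, then the output S satisfies h(S) ≥ (β/(β+p)) · max{ h(U) : U ∈ I }. -/

import Mathlib

open Finset

open Finset

lemma aux_submod {ι : Type*} [DecidableEq ι] (h : Finset ι → ℝ)
    (h_sub : ∀ A B : Finset ι, A ⊆ B → ∀ e ∉ B,
      h (insert e A) - h A ≥ h (insert e B) - h B)
    (B : Finset ι) :
    ∀ C : Finset ι, h (B ∪ C) ≤ h B + ∑ u ∈ C, max 0 (h (insert u B) - h B) := by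
  intro C
  induction C using Finset.induction_on with
  | empty => simp
  | insert _ _ ha ih =>
    rename_i a C'
    rw [Finset.union_insert, Finset.sum_insert ha]
    by_cases hmem : a ∈ B ∪ C'
    · rw [Finset.insert_eq_self.mpr hmem]
      have : (0:ℝ) ≤ max 0 (h (insert a B) - h B) := le_max_left _ _
      linarith
    · have h1 := h_sub B (B ∪ C') Finset.subset_union_left a hmem
      have h2 : h (insert a B) - h B ≤ max 0 (h (insert a B) - h B) := le_max_right _ _
      linarith

lemma aux_chain {ι : Type*} [DecidableEq ι] (f : ι → ℝ) (b : ℕ → ℝ) :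
    ∀ (n : ℕ) (Wc : ℕ → Finset ι), Wc 0 = ∅ →
    (∀ t < n, Wc t ⊆ Wc (t+1)) →
    (∀ t < n, ∀ u ∈ Wc (t+1) \ Wc t, f u ≤ b t) →
    ∑ u ∈ Wc n, f u ≤ ∑ t ∈ range n, (((Wc (t+1)).card : ℝ) - ((Wc t).card : ℝ)) * b t := by
  intro n
  induction n with
  | zero => intro Wc h0 _ _; simp [h0]
  | succ n ih =>
    intro Wc h0 hsub hf
    have hsubn : Wc n ⊆ Wc (n+1) := hsub n (by omega)
    have hsplit : ∑ u ∈ Wc (n+1) \ Wc n, f u + ∑ u ∈ Wc n, f u = ∑ u ∈ Wc (n+1), f u :=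
      Finset.sum_sdiff hsubn
    have h1 : ∑ u ∈ Wc (n+1) \ Wc n, f u ≤ ((Wc (n+1) \ Wc n).card : ℝ) * b n := by
      have := Finset.sum_le_card_nsmul (Wc (n+1) \ Wc n) f (b n)
        (fun u hu => hf n (by omega) u hu)
      simpa [nsmul_eq_mul] using this
    have hcard : ((Wc (n+1) \ Wc n).card : ℝ) = ((Wc (n+1)).card : ℝ) - ((Wc n).card : ℝ) := by
      rw [Finset.card_sdiff_of_subset hsubn, Nat.cast_sub (Finset.card_le_card hsubn)]
    have h2 := ih Wc h0 (fun t ht => hsub t (by omega)) (fun t ht => hf t (by omega))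
    rw [hcard] at h1
    rw [Finset.sum_range_succ]
    linarith
open Finset

lemma aux_abel (p' : ℕ) (b : ℕ → ℝ) (hb0 : ∀ t, 0 ≤ b t) (hbm : ∀ t, b (t+1) ≤ b t) :
    ∀ (n : ℕ) (N : ℕ → ℕ), N 0 = 0 → (∀ t ≤ n, N t ≤ p' * t) →
    ∑ t ∈ range n, ((N (t+1) : ℝ) - (N t : ℝ)) * b t ≤ (p' : ℝ) * ∑ t ∈ range n, b t := by
  have key : ∀ (n : ℕ) (N : ℕ → ℕ), N 0 = 0 → (∀ t ≤ n, N t ≤ p' * t) →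
      ∑ t ∈ range n, ((N (t+1) : ℝ) - (N t : ℝ)) * b t
        ≤ (p' : ℝ) * ∑ t ∈ range n, b t - (((p' * n : ℕ) : ℝ) - (N n : ℝ)) * b n := by
    intro n
    induction n with
    | zero => intro N h0 _; simp [h0]
    | succ n ih =>
      intro N h0 hN
      have h1 := ih N h0 (fun t ht => hN t (by omega))
      have h2 : ((N (n+1) : ℕ) : ℝ) ≤ ((p' * (n+1) : ℕ) : ℝ) := by
        exact_mod_cast hN (n+1) le_rfl
      have h3 : (((p' * (n+1) : ℕ) : ℝ) - (N (n+1) : ℝ)) * b (n+1)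
          ≤ (((p' * (n+1) : ℕ) : ℝ) - (N (n+1) : ℝ)) * b n :=
        mul_le_mul_of_nonneg_left (hbm n) (by linarith)
      rw [Finset.sum_range_succ, Finset.sum_range_succ]
      have hc : ((p' * (n+1) : ℕ) : ℝ) = ((p' * n : ℕ) : ℝ) + (p' : ℝ) := by push_cast; ring
      have h5 : ((N (n+1) : ℝ) - (N n : ℝ)) * b n - (((p' * n : ℕ) : ℝ) - (N n : ℝ)) * b n
          = (p' : ℝ) * b n - (((p' * (n+1) : ℕ) : ℝ) - (N (n+1) : ℝ)) * b n := by
        rw [hc]; ring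
      linarith [h1, h3, h5]
  intro n N h0 hN
  have h1 := key n N h0 hN
  have h2 : 0 ≤ (((p' * n : ℕ) : ℝ) - (N n : ℝ)) * b n := by
    apply mul_nonneg _ (hb0 n)
    have : ((N n : ℕ) : ℝ) ≤ ((p' * n : ℕ) : ℝ) := by exact_mod_cast hN n le_rfl
    linarith
  linarith

/-- a `β`-approximate greedy algorithm for a normalized monotone
submodular function over the intersection of `p` matroids achieves a
`β/(β+p)` approximation: `β * h U ≤ (β + p) * h (s T)` for every feasible `U`. -/
theorem approximate_greedy_guarantee {ι : Type*} [Fintype ι] [DecidableEq ι]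
    (h : Finset ι → ℝ)
    (h_nonneg : ∀ S, 0 ≤ h S)
    (h_norm : h ∅ = 0)
    (h_mono : ∀ A B : Finset ι, A ⊆ B → h A ≤ h B)
    (h_sub : ∀ A B : Finset ι, A ⊆ B → ∀ e ∉ B,
      h (insert e A) - h A ≥ h (insert e B) - h B)
    {p : ℕ} (I : Fin p → Finset ι → Prop)
    (hI_empty : ∀ i, I i ∅)
    (hI_down : ∀ i, ∀ A B : Finset ι, I i A → B ⊆ A → I i B)
    (hI_exch : ∀ i, ∀ A B : Finset ι, I i A → I i B → B.card < A.card →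
      ∃ e ∈ A, e ∉ B ∧ I i (insert e B))
    (F : Finset ι → Prop) (hF : ∀ S, F S ↔ ∀ i, I i S)
    (β : ℝ) (hβ : 0 < β) (hβ1 : β ≤ 1)
    -- the β-approximate greedy trajectory `s 0 = ∅, …, s T`
    (T : ℕ) (s : ℕ → Finset ι)
    (hs0 : s 0 = ∅)
    (hstep : ∀ j < T, ∃ e ∉ s j, s (j + 1) = insert e (s j) ∧ F (s (j + 1)) ∧
      ∀ e' ∉ s j, F (insert e' (s j)) →
        β * (h (insert e' (s j)) - h (s j)) ≤ h (s (j + 1)) - h (s j))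
    (hstop : ∀ e ∉ s T, F (insert e (s T)) → h (insert e (s T)) - h (s T) ≤ 0) :
    ∀ U : Finset ι, F U → β * h U ≤ (β + p) * h (s T) := by
  classical
  intro U hU
  -- basic closure facts
  have hFdown : ∀ A B : Finset ι, F A → B ⊆ A → F B := by
    intro A B hA hBA
    rw [hF]; intro i; exact hI_down i A B ((hF A).mp hA i) hBA
  have hsmono : ∀ j < T, s j ⊆ s (j+1) := by
    intro j hj; obtain ⟨e, he, hseq, _, _⟩ := hstep j hj
    rw [hseq]; exact Finset.subset_insert _ _
  have hsub2 : ∀ j ≤ T, ∀ i ≤ j, s i ⊆ s j := by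
    intro j hj
    induction j with
    | zero =>
      intro i hi
      have h0 : i = 0 := by omega
      subst h0
      exact subset_rfl
    | succ n ihn =>
      intro i hi
      rcases Nat.lt_or_ge i (n+1) with hlt | hge
      · exact (ihn (by omega) i (by omega)).trans (hsmono n (by omega))
      · have : i = n+1 := by omega
        subst this; exact subset_rfl
  have hFs : ∀ t ≤ T, F (s t) := by
    intro t ht
    cases t with
    | zero => rw [hs0, hF]; intro i; exact hI_empty i
    | succ n => obtain ⟨e, _, _, hf, _⟩ := hstep n (by omega); exact hf
  have hcards : ∀ t ≤ T, (s t).card = t := by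
    intro t ht
    induction t with
    | zero => simp [hs0]
    | succ n ih =>
      obtain ⟨e, he, hseq, _, _⟩ := hstep n (by omega)
      rw [hseq, Finset.card_insert_of_notMem he, ih (by omega)]
  -- the "witness" sets
  set W : Finset ι := U \ s T with hWdef
  have hWU : W ⊆ U := Finset.sdiff_subset
  have hWnot : ∀ u ∈ W, u ∉ s T := fun u hu => (Finset.mem_sdiff.mp hu).2
  set Wt : ℕ → Finset ι := fun t => W.filter (fun u => ¬ F (insert u (s t))) with hWtdef
  set A : ℕ → NNReal := fun t =>
    (Finset.univ.filter (fun e => e ∉ s t ∧ F (insert e (s t)))).sup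
      (fun e => Real.toNNReal (h (insert e (s t)) - h (s t))) with hAdef
  set b : ℕ → ℝ := fun t => ((A (min t T) : NNReal) : ℝ) with hbdef
  have hb0 : ∀ t, 0 ≤ b t := fun t => (A (min t T)).coe_nonneg
  -- monotonicity of b
  have hAmono : ∀ t < T, A (t+1) ≤ A t := by
    intro t ht
    simp only [hAdef]
    apply Finset.sup_le
    intro e he
    rw [Finset.mem_filter] at he
    obtain ⟨-, he1, he2⟩ := he
    have he1' : e ∉ s t := fun hc => he1 (hsmono t ht hc)
    have he2' : F (insert e (s t)) :=
      hFdown _ _ he2 (Finset.insert_subset_insert e (hsmono t ht))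
    have hρ : h (insert e (s (t+1))) - h (s (t+1)) ≤ h (insert e (s t)) - h (s t) :=
      h_sub (s t) (s (t+1)) (hsmono t ht) e he1
    calc Real.toNNReal (h (insert e (s (t+1))) - h (s (t+1)))
        ≤ Real.toNNReal (h (insert e (s t)) - h (s t)) := Real.toNNReal_le_toNNReal hρ
      _ ≤ A t := by
          have hm : e ∈ Finset.univ.filter (fun e => e ∉ s t ∧ F (insert e (s t))) :=
            Finset.mem_filter.mpr ⟨Finset.mem_univ e, he1', he2'⟩
          exact Finset.le_sup (f := fun e => Real.toNNReal (h (insert e (s t)) - h (s t))) hm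
  have hbm : ∀ t, b (t+1) ≤ b t := by
    intro t
    rcases Nat.lt_or_ge t T with ht | ht
    · have h1 : min (t+1) T = t+1 := by omega
      have h2 : min t T = t := by omega
      rw [hbdef]; dsimp only
      rw [h1, h2]
      exact_mod_cast hAmono t ht
    · have h1 : min (t+1) T = T := by omega
      have h2 : min t T = T := by omega
      rw [hbdef]; dsimp only; rw [h1, h2]
  -- Wt facts
  have hWt0 : Wt 0 = ∅ := by
    rw [hWtdef]
    apply Finset.filter_eq_empty_iff.mpr
    intro u hu
    simp only [not_not]
    rw [hs0]
    exact hFdown U _ hU (by simp [Finset.insert_subset_iff, hWU hu])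
  have hWtchain : ∀ t < T, Wt t ⊆ Wt (t+1) := by
    intro t ht u hu
    rw [hWtdef] at hu ⊢
    rw [Finset.mem_filter] at hu ⊢
    refine ⟨hu.1, fun hc => hu.2 ?_⟩
    exact hFdown _ _ hc (Finset.insert_subset_insert u (hsmono t ht))
  -- cardinality bound via the matroids
  have hN : ∀ t ≤ T, (Wt t).card ≤ p * t := by
    intro t ht
    have hsubB : Wt t ⊆ Finset.univ.biUnion
        (fun i : Fin p => W.filter (fun u => ¬ I i (insert u (s t)))) := by
      intro u hu
      rw [hWtdef, Finset.mem_filter] at hu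
      have : ¬ ∀ i, I i (insert u (s t)) := fun hc => hu.2 ((hF _).mpr hc)
      push_neg at this
      obtain ⟨i, hi⟩ := this
      exact Finset.mem_biUnion.mpr ⟨i, Finset.mem_univ i, Finset.mem_filter.mpr ⟨hu.1, hi⟩⟩
    calc (Wt t).card ≤ (Finset.univ.biUnion
          (fun i : Fin p => W.filter (fun u => ¬ I i (insert u (s t))))).card :=
          Finset.card_le_card hsubB
      _ ≤ ∑ i : Fin p, (W.filter (fun u => ¬ I i (insert u (s t)))).card :=
          Finset.card_biUnion_le
      _ ≤ ∑ _i : Fin p, t := by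
          apply Finset.sum_le_sum
          intro i _
          by_contra hc
          push_neg at hc
          have hBI : I i (W.filter (fun u => ¬ I i (insert u (s t)))) :=
            hI_down i U _ ((hF U).mp hU i) ((Finset.filter_subset _ _).trans hWU)
          have hsI : I i (s t) := (hF _).mp (hFs t ht) i
          have hcard : (s t).card < (W.filter (fun u => ¬ I i (insert u (s t)))).card := by
            rw [hcards t ht]; exact hc
          obtain ⟨e, heB, heS, heI⟩ := hI_exch i _ _ hBI hsI hcard
          exact (Finset.mem_filter.mp heB).2 heI
      _ = p * t := by simp [mul_comm]
  -- bound on killed elements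
  have hfbound : ∀ t < T, ∀ u ∈ Wt (t+1) \ Wt t,
      max 0 (h (insert u (s T)) - h (s T)) ≤ b t := by
    intro t ht u hu
    rw [Finset.mem_sdiff] at hu
    obtain ⟨hu1, hu2⟩ := hu
    have huW : u ∈ W := (Finset.mem_filter.mp (by rw [hWtdef] at hu1; exact hu1)).1
    have huF : F (insert u (s t)) := by
      by_contra hc
      exact hu2 (by rw [hWtdef]; exact Finset.mem_filter.mpr ⟨huW, hc⟩)
    have hust : u ∉ s t := fun hc => hWnot u huW (hsub2 T le_rfl t (by omega) hc)
    have hρ : h (insert u (s T)) - h (s T) ≤ h (insert u (s t)) - h (s t) :=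
      h_sub (s t) (s T) (hsub2 T le_rfl t (by omega)) u (hWnot u huW)
    have h1 : max 0 (h (insert u (s T)) - h (s T)) ≤ max 0 (h (insert u (s t)) - h (s t)) :=
      max_le_max le_rfl hρ
    have h2 : max 0 (h (insert u (s t)) - h (s t))
        = ((Real.toNNReal (h (insert u (s t)) - h (s t)) : NNReal) : ℝ) := by
      rw [Real.coe_toNNReal', max_comm]
    have h3 : Real.toNNReal (h (insert u (s t)) - h (s t)) ≤ A t := by
      have hm : u ∈ Finset.univ.filter (fun e => e ∉ s t ∧ F (insert e (s t))) :=
        Finset.mem_filter.mpr ⟨Finset.mem_univ u, hust, huF⟩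
      simp only [hAdef]
      exact Finset.le_sup (f := fun e => Real.toNNReal (h (insert e (s t)) - h (s t))) hm
    have h4 : b t = ((A t : NNReal) : ℝ) := by
      rw [hbdef]; dsimp only; rw [min_eq_left (by omega : t ≤ T)]
    calc max 0 (h (insert u (s T)) - h (s T))
        ≤ max 0 (h (insert u (s t)) - h (s t)) := h1
      _ = ((Real.toNNReal (h (insert u (s t)) - h (s t)) : NNReal) : ℝ) := h2
      _ ≤ ((A t : NNReal) : ℝ) := NNReal.coe_le_coe.mpr h3
      _ = b t := h4.symm
  -- the greedy gains bound the partial maxima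
  have hkey : ∀ n ≤ T, ∃ m ≤ n, β * ∑ t ∈ range n, b t ≤ h (s m) := by
    intro n hn
    induction n with
    | zero => exact ⟨0, le_refl 0, by simp [hs0, h_norm]⟩
    | succ n ih =>
      obtain ⟨m, hm, hle⟩ := ih (by omega)
      by_cases hA0 : A n = 0
      · refine ⟨m, by omega, ?_⟩
        have hb0' : b n = 0 := by
          simp only [hbdef]
          rw [min_eq_left (by omega : n ≤ T), hA0, NNReal.coe_zero]
        rw [Finset.sum_range_succ, hb0']
        simpa using hle
      · have hne : (Finset.univ.filter (fun e => e ∉ s n ∧ F (insert e (s n)))).Nonempty := by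
          by_contra hemp
          rw [Finset.not_nonempty_iff_eq_empty] at hemp
          apply hA0
          simp only [hAdef]
          rw [hemp, Finset.sup_empty]
          rfl
        obtain ⟨e, hemem, hesup⟩ := Finset.exists_mem_eq_sup _ hne
          (fun e => Real.toNNReal (h (insert e (s n)) - h (s n)))
        have hemem' := Finset.mem_filter.mp hemem
        obtain ⟨e', he', hseq, hfs, hbest⟩ := hstep n (by omega)
        have h1 : β * (h (insert e (s n)) - h (s n)) ≤ h (s (n+1)) - h (s n) :=
          hbest e hemem'.2.1 hemem'.2.2
        have hAn : A n = Real.toNNReal (h (insert e (s n)) - h (s n)) := by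
          rw [hAdef]; exact hesup
        have hρpos : 0 < h (insert e (s n)) - h (s n) := by
          by_contra hc
          push_neg at hc
          apply hA0
          rw [hAn, Real.toNNReal_eq_zero.mpr hc]
        have hbn : b n = h (insert e (s n)) - h (s n) := by
          simp only [hbdef]
          rw [min_eq_left (by omega : n ≤ T), hAn, Real.coe_toNNReal _ hρpos.le]
        have hmono' : h (s m) ≤ h (s n) := h_mono _ _ (hsub2 n (by omega) m (by omega))
        refine ⟨n+1, le_rfl, ?_⟩
        rw [Finset.sum_range_succ, mul_add, hbn]
        linarith
  -- main submodularity chain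
  have hstep1 : h U ≤ h (s T) + ∑ u ∈ W, max 0 (h (insert u (s T)) - h (s T)) := by
    have h0 := aux_submod h h_sub (s T) W
    have hUsub : U ⊆ s T ∪ W := by
      intro x hx
      rw [Finset.mem_union, hWdef, Finset.mem_sdiff]
      by_cases hxs : x ∈ s T
      · exact Or.inl hxs
      · exact Or.inr ⟨hx, hxs⟩
    exact le_trans (h_mono U (s T ∪ W) hUsub) h0
  have hWtT : Wt T ⊆ W := by rw [hWtdef]; exact Finset.filter_subset _ _
  have hsplit : ∑ u ∈ W \ Wt T, max 0 (h (insert u (s T)) - h (s T))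
      + ∑ u ∈ Wt T, max 0 (h (insert u (s T)) - h (s T))
      = ∑ u ∈ W, max 0 (h (insert u (s T)) - h (s T)) := Finset.sum_sdiff hWtT
  have hzero : ∑ u ∈ W \ Wt T, max 0 (h (insert u (s T)) - h (s T)) = 0 := by
    apply Finset.sum_eq_zero
    intro u hu
    rw [Finset.mem_sdiff] at hu
    have huW := hu.1
    have huF : F (insert u (s T)) := by
      by_contra hc
      exact hu.2 (by rw [hWtdef]; exact Finset.mem_filter.mpr ⟨huW, hc⟩)
    have := hstop u (hWnot u huW) huF
    simp [max_eq_left this]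
  have hchain := aux_chain (fun u => max 0 (h (insert u (s T)) - h (s T))) b T Wt hWt0
    hWtchain hfbound
  have hNT0 : (Wt 0).card = 0 := by rw [hWt0]; rfl
  have habel := aux_abel p b hb0 hbm T (fun t => (Wt t).card) hNT0 hN
  obtain ⟨m, hm, hgreedy⟩ := hkey T le_rfl
  have hmT : h (s m) ≤ h (s T) := h_mono _ _ (hsub2 T le_rfl m hm)
  have hsum : ∑ u ∈ W, max 0 (h (insert u (s T)) - h (s T)) ≤ (p:ℝ) * ∑ t ∈ range T, b t := by
    calc ∑ u ∈ W, max 0 (h (insert u (s T)) - h (s T))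
        = ∑ u ∈ Wt T, max 0 (h (insert u (s T)) - h (s T)) := by rw [← hsplit, hzero, zero_add]
      _ ≤ ∑ t ∈ range T, (((Wt (t+1)).card : ℝ) - ((Wt t).card : ℝ)) * b t := hchain
      _ ≤ (p:ℝ) * ∑ t ∈ range T, b t := habel
  have hfin : β * ∑ t ∈ range T, b t ≤ h (s T) := hgreedy.trans hmT
  have h1 : β * h U ≤ β * (h (s T) + ∑ u ∈ W, max 0 (h (insert u (s T)) - h (s T))) :=
    mul_le_mul_of_nonneg_left hstep1 hβ.le
  have h2 : β * ∑ u ∈ W, max 0 (h (insert u (s T)) - h (s T))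
      ≤ β * ((p:ℝ) * ∑ t ∈ range T, b t) := mul_le_mul_of_nonneg_left hsum hβ.le
  have h3 : (p:ℝ) * (β * ∑ t ∈ range T, b t) ≤ (p:ℝ) * h (s T) :=
    mul_le_mul_of_nonneg_left hfin (Nat.cast_nonneg p)
  have h4 : β * ((p:ℝ) * ∑ t ∈ range T, b t) = (p:ℝ) * (β * ∑ t ∈ range T, b t) := by ring
  have h5 : (β + (p:ℝ)) * h (s T) = β * h (s T) + (p:ℝ) * h (s T) := by ring
  rw [mul_add] at h1
  linarith
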